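/- (Theorem 3.1) Fix an integer n ≥ 1. For every δ > 0 there exists ε₀ > 0 such that: whenever λ₁, …, λₙ are mutually distinct complex numbers with |λᵢ| < ε₀ for all i, there exist complex coefficients c₁, …, cₙ such that the function f(x) = ∑_{i=1}^{n} cᵢ e^{λᵢ x}, which belongs to the span of e^{λ₁ x}, …, e^{λₙ x} in L²([−π, π]), satisfies ‖f(x) − x^{n−1}‖_{L²([−π,π])} < δ. -/

import Mathlib

open MeasureTheory

/-- The L² norm on the interval `[-π, π]`: `‖g‖ = (∫_{-π}^{π} |g(x)|² dx)^{1/2}`. -/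
noncomputable def L2norm (g : ℝ → ℂ) : ℝ :=
  Real.sqrt (∫ x in Set.Icc (-Real.pi) Real.pi, ‖g x‖ ^ 2)

section Aux

open Finset Complex Polynomial Metric

set_option maxHeartbeats 1000000

lemma abs_sub_le' (a b : ℂ) : ‖(a - b)‖ ≤ ‖a‖ + ‖b‖ := by
  simpa using norm_sub_le a b

lemma prod_est {ι : Type*} (s : Finset ι) (z : ℂ) (hz : ‖z‖ = 1) {ε : ℝ}
    (hε0 : 0 ≤ ε) (hε1 : ε ≤ 1) (f : ι → ℂ) (hf : ∀ i ∈ s, ‖(f i)‖ ≤ ε) :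
    ‖(∏ i ∈ s, (z - f i) - z ^ s.card)‖ ≤ s.card * ε * 2 ^ s.card := by
  induction s using Finset.cons_induction with
  | empty => simp
  | cons a s ha ih =>
    have hfa : ‖(f a)‖ ≤ ε := hf a (mem_cons_self a s)
    have ih' := ih (fun i hi => hf i (mem_cons.2 (Or.inr hi)))
    rw [Finset.prod_cons, Finset.card_cons]
    have key : (z - f a) * ∏ i ∈ s, (z - f i) - z ^ (s.card + 1)
        = (z - f a) * (∏ i ∈ s, (z - f i) - z ^ s.card) - f a * z ^ s.card := by
      ring
    rw [key]
    have h1 : ‖(z - f a)‖ ≤ 2 := by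
      calc ‖(z - f a)‖ ≤ ‖z‖ + ‖(f a)‖ := abs_sub_le' z (f a)
        _ ≤ 1 + 1 := by rw [hz]; linarith
        _ = 2 := by norm_num
    have h2 : ‖(z ^ s.card)‖ = 1 := by
      rw [norm_pow, hz, one_pow]
    have h2c : (1:ℝ) ≤ 2 ^ s.card := one_le_pow₀ (by norm_num)
    calc ‖((z - f a) * (∏ i ∈ s, (z - f i) - z ^ s.card) - f a * z ^ s.card)‖
        ≤ ‖((z - f a) * (∏ i ∈ s, (z - f i) - z ^ s.card))‖
          + ‖(f a * z ^ s.card)‖ := abs_sub_le' _ _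
      _ ≤ 2 * (s.card * ε * 2 ^ s.card) + ε * 1 := by
          rw [norm_mul, norm_mul, h2]
          have := norm_nonneg (∏ i ∈ s, (z - f i) - z ^ s.card)
          gcongr
      _ ≤ (s.card + 1 : ℕ) * ε * 2 ^ (s.card + 1) := by
          push_cast
          have hε2 : ε * 1 ≤ ε * (2 ^ s.card * 2) := by nlinarith
          have hc : (0:ℝ) ≤ (s.card : ℝ) * ε * 2 ^ s.card := by positivity
          ring_nf
          nlinarith [hc, hε2]

lemma partial_fractions {n : ℕ} (hn : 1 ≤ n) (l : Fin n → ℂ) (hl : Function.Injective l)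
    (z : ℂ) (hz : ∀ i, z ≠ l i) :
    (∏ i, (z - l i))⁻¹
      = ∑ i, (∏ j ∈ Finset.univ.erase i, (l i - l j))⁻¹ * (z - l i)⁻¹ := by
  haveI : NeZero n := ⟨by omega⟩
  have key : (∑ i, (∏ j ∈ Finset.univ.erase i, (l i - l j))⁻¹ * (z - l i)⁻¹)
      * (∏ i, (z - l i)) = 1 := by
    rw [Finset.sum_mul]
    have hterm : ∀ i : Fin n,
        (∏ j ∈ Finset.univ.erase i, (l i - l j))⁻¹ * (z - l i)⁻¹ * (∏ j, (z - l j))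
          = Polynomial.eval z (Lagrange.basis Finset.univ l i) := by
      intro i
      have hzi : (z - l i) ≠ 0 := sub_ne_zero.2 (hz i)
      rw [← Finset.mul_prod_erase Finset.univ _ (Finset.mem_univ i),
        Lagrange.basis, Polynomial.eval_prod]
      have : ∀ j ∈ Finset.univ.erase i,
          Polynomial.eval z (Lagrange.basisDivisor (l i) (l j))
            = (l i - l j)⁻¹ * (z - l j) := by
        intro j _
        simp [Lagrange.basisDivisor]
      rw [Finset.prod_congr rfl this, Finset.prod_mul_distrib]
      rw [mul_assoc, inv_mul_cancel_left₀ hzi, Finset.prod_inv_distrib]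
    rw [Finset.sum_congr rfl (fun i _ => hterm i), ← Polynomial.eval_finset_sum,
      Lagrange.sum_basis hl.injOn Finset.univ_nonempty]
    simp
  exact inv_eq_of_mul_eq_one_left key

lemma circleIntegral_finset_sum {ι : Type*} (s : Finset ι) (c : ℂ) (R : ℝ) (f : ι → ℂ → ℂ)
    (h : ∀ i ∈ s, CircleIntegrable (f i) c R) :
    (∮ z in C(c, R), ∑ i ∈ s, f i z) = ∑ i ∈ s, ∮ z in C(c, R), f i z := by
  simp only [circleIntegral, Finset.smul_sum]
  rw [intervalIntegral.integral_finset_sum]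
  intro i hi
  exact (h i hi).out

/-- Cauchy formula at a simple pole for `exp (x*z)`. -/
lemma cauchy_simple_pole (x w : ℂ) (hw : ‖w‖ < 1) :
    (∮ z in C(0, 1), (z - w)⁻¹ * Complex.exp (x * z)) = (2 * Real.pi * I) * Complex.exp (x * w) := by
  have hd : DifferentiableOn ℂ (fun z => Complex.exp (x * z)) (closedBall (0:ℂ) 1) :=
    ((Complex.differentiable_exp.comp ((differentiable_id.const_mul x)))).differentiableOn
  have hw' : w ∈ ball (0:ℂ) 1 := by
    simpa [Complex.dist_eq] using hw
  have := hd.circleIntegral_sub_inv_smul hw'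
  simpa [smul_eq_mul] using this

lemma cauchy_pole_n (x : ℂ) {n : ℕ} (hn : 1 ≤ n) :
    (∮ z in C(0, 1), (z ^ n)⁻¹ * Complex.exp (x * z))
      = (2 * Real.pi * I) * ((Nat.factorial (n-1) : ℕ) : ℂ)⁻¹ * x ^ (n-1) := by
  set f : ℂ → ℂ := fun z => Complex.exp (x * z) with hf
  have hdiff : Differentiable ℂ f :=
    Complex.differentiable_exp.comp (differentiable_id.const_mul x)
  have hp : HasFPowerSeriesOnBall f (cauchyPowerSeries f 0 (1:NNReal)) 0 ⊤ :=
    hdiff.hasFPowerSeriesOnBall 0 one_pos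
  have key := hp.factorial_smul (y := (1:ℂ)) (n-1)
  rw [← iteratedDeriv_eq_iteratedFDeriv] at key
  have hder : iteratedDeriv (n-1) f 0 = x ^ (n-1) := by
    have := iteratedDeriv_cexp_const_mul (n-1) x
    rw [hf, this]
    simp
  rw [hder, cauchyPowerSeries_apply] at key
  simp only [NNReal.coe_one] at key
  -- key : (n-1)! • ((2πI)⁻¹ • ∮ z in C(0,1), (1 / (z - 0)) ^ (n-1) • (z-0)⁻¹ • f z) = x ^ (n-1)
  have hcongr : (∮ z in C(0, 1), ((1:ℂ) / (z - 0)) ^ (n-1) • (z - 0)⁻¹ • f z)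
      = ∮ z in C(0, 1), (z ^ n)⁻¹ * Complex.exp (x * z) := by
    refine circleIntegral.integral_congr (by norm_num) (fun z hz => ?_)
    have hz1 : ‖z‖ = 1 := by
      simpa [Complex.dist_eq] using hz
    have hz0 : z ≠ 0 := by
      intro h; rw [h] at hz1; simp at hz1
    simp only [sub_zero, smul_eq_mul, one_div, hf]
    rw [← mul_assoc, ← pow_succ, Nat.sub_add_cancel hn, inv_pow]
  rw [hcongr] at key
  have hfac : ((Nat.factorial (n-1) : ℕ) : ℂ) ≠ 0 := Nat.cast_ne_zero.2 (Nat.factorial_ne_zero _)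
  have hpi : (2 * (Real.pi:ℂ) * I) ≠ 0 := by
    simp [Real.pi_ne_zero, I_ne_zero]
  rw [nsmul_eq_mul, smul_eq_mul] at key
  rw [← key]
  field_simp

lemma abs_one_of_sphere {z : ℂ} (hz : z ∈ sphere (0:ℂ) 1) : ‖z‖ = 1 := by
  simpa [Complex.dist_eq] using hz

/-- pointwise bound on the sphere -/
lemma pointwise_bound {n : ℕ} (hn : 1 ≤ n) (l : Fin n → ℂ) {ε : ℝ} (hε0 : 0 ≤ ε)
    (hε : ε ≤ 1/2) (hl : ∀ i, ‖(l i)‖ ≤ ε) (x : ℂ) (hx : ‖x‖ ≤ Real.pi)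
    {z : ℂ} (hz : ‖z‖ = 1) :
    ‖((∏ i, (z - l i))⁻¹ * Complex.exp (x * z)
        - (z ^ n)⁻¹ * Complex.exp (x * z))‖
      ≤ n * ε * 4 ^ n * Real.exp Real.pi := by
  set a : ℂ := ∏ i, (z - l i) with ha
  set b : ℂ := z ^ n with hb
  have hz0 : z ≠ 0 := by
    intro h; rw [h] at hz; simp at hz
  have hbabs : ‖b‖ = 1 := by rw [hb, norm_pow, hz, one_pow]
  have hb0 : b ≠ 0 := by
    intro h; rw [h] at hbabs; simp at hbabs
  have halow : ((2:ℝ)⁻¹) ^ n ≤ ‖a‖ := by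
    rw [ha, norm_prod]
    have step : ∀ i : Fin n, (2:ℝ)⁻¹ ≤ ‖(z - l i)‖ := by
      intro i
      calc (2:ℝ)⁻¹ = 1 - 1/2 := by norm_num
        _ ≤ ‖z‖ - ‖(l i)‖ := by
            rw [hz]; linarith [hl i, hε]
        _ ≤ ‖(z - l i)‖ := by
            linarith [abs_norm_sub_norm_le z (l i), le_abs_self (‖z‖ - ‖(l i)‖)]
    calc ((2:ℝ)⁻¹) ^ n = ∏ _i : Fin n, (2:ℝ)⁻¹ := by simp
      _ ≤ ∏ i : Fin n, ‖(z - l i)‖ :=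
          Finset.prod_le_prod (fun i _ => by positivity) (fun i _ => step i)
  have ha0 : a ≠ 0 := by
    intro h
    rw [h, norm_zero] at halow
    have : (0:ℝ) < (2:ℝ)⁻¹ ^ n := by positivity
    linarith
  have hainv : ‖a⁻¹‖ ≤ 2 ^ n := by
    rw [norm_inv]
    calc (‖a‖)⁻¹ ≤ ((2:ℝ)⁻¹ ^ n)⁻¹ := by
          apply inv_anti₀ (by positivity) halow
      _ = 2 ^ n := by rw [← inv_pow, inv_inv]
  have hdiffab : ‖(a - b)‖ ≤ n * ε * 2 ^ n := by
    have := prod_est Finset.univ z hz hε0 (by linarith) l (fun i _ => hl i)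
    simpa [ha, hb] using this
  have hexp : ‖(Complex.exp (x * z))‖ ≤ Real.exp Real.pi := by
    rw [Complex.norm_exp]
    apply Real.exp_le_exp.2
    calc (x * z).re ≤ |(x * z).re| := le_abs_self _
      _ ≤ ‖(x * z)‖ := Complex.abs_re_le_norm _
      _ = ‖x‖ * ‖z‖ := norm_mul _ _
      _ ≤ Real.pi := by rw [hz, mul_one]; exact hx
  have key : a⁻¹ * Complex.exp (x * z) - b⁻¹ * Complex.exp (x * z)
      = ((b - a) * (a⁻¹ * b⁻¹)) * Complex.exp (x * z) := by
    field_simp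
  rw [key]
  rw [norm_mul, norm_mul, norm_mul]
  have h1 : ‖(b - a)‖ ≤ n * ε * 2 ^ n := by
    rw [norm_sub_rev]
    exact hdiffab
  have h2 : ‖b⁻¹‖ = 1 := by rw [norm_inv, hbabs, inv_one]
  calc ‖(b - a)‖ * (‖a⁻¹‖ * ‖b⁻¹‖) * ‖(Complex.exp (x * z))‖
      ≤ (n * ε * 2 ^ n) * (2 ^ n * 1) * Real.exp Real.pi := by
        have e0 : (0:ℝ) ≤ ‖(b - a)‖ := norm_nonneg _
        have e1 : (0:ℝ) ≤ ‖a⁻¹‖ := norm_nonneg _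
        gcongr <;> first | exact h1 | exact (le_of_eq h2) | exact hainv | exact hexp | positivity
      _ = n * ε * 4 ^ n * Real.exp Real.pi := by
        rw [mul_one]
        ring_nf
        rw [show (4:ℝ) ^ n = 2 ^ n * 2 ^ n by rw [← mul_pow]; norm_num]
        ring



lemma ne_of_sphere {z w : ℂ} (hz : z ∈ sphere (0:ℂ) 1) (hw : ‖w‖ < 1) : z ≠ w := by
  intro h
  rw [← h, abs_one_of_sphere hz] at hw
  exact lt_irrefl _ hw

lemma integral_eq_sum {n : ℕ} (hn : 1 ≤ n) (l : Fin n → ℂ) (hl : Function.Injective l)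
    (hl1 : ∀ i, ‖(l i)‖ < 1) (x : ℂ) :
    (∮ z in C(0, 1), (∏ i, (z - l i))⁻¹ * Complex.exp (x * z))
      = ∑ i, (∏ j ∈ Finset.univ.erase i, (l i - l j))⁻¹
          * ((2 * Real.pi * I) * Complex.exp (x * l i)) := by
  have hcont : ∀ i : Fin n, ContinuousOn
      (fun z => (∏ j ∈ Finset.univ.erase i, (l i - l j))⁻¹ * ((z - l i)⁻¹ * Complex.exp (x * z)))
      (sphere (0:ℂ) 1) := by
    intro i
    refine continuousOn_const.mul (ContinuousOn.mul ?_ ?_)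
    · refine ContinuousOn.inv₀ ((continuous_id.sub continuous_const).continuousOn) ?_
      intro z hz
      exact sub_ne_zero.2 (ne_of_sphere hz (hl1 i))
    · exact (Complex.continuous_exp.comp (continuous_const.mul continuous_id)).continuousOn
  have step1 : (∮ z in C(0, 1), (∏ i, (z - l i))⁻¹ * Complex.exp (x * z))
      = ∮ z in C(0, 1), ∑ i, (∏ j ∈ Finset.univ.erase i, (l i - l j))⁻¹
          * ((z - l i)⁻¹ * Complex.exp (x * z)) := by
    refine circleIntegral.integral_congr (by norm_num) (fun z hz => ?_)
    rw [partial_fractions hn l hl z (fun i => ne_of_sphere hz (hl1 i)), Finset.sum_mul]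
    simp [mul_assoc]
  rw [step1, circleIntegral_finset_sum _ _ _ _
    (fun i _ => ContinuousOn.circleIntegrable (by norm_num) (hcont i))]
  refine Finset.sum_congr rfl (fun i _ => ?_)
  have : (∮ z in C(0, 1), (∏ j ∈ Finset.univ.erase i, (l i - l j))⁻¹
      * ((z - l i)⁻¹ * Complex.exp (x * z)))
      = (∏ j ∈ Finset.univ.erase i, (l i - l j))⁻¹
        • ∮ z in C(0, 1), (z - l i)⁻¹ * Complex.exp (x * z) := by
    rw [← circleIntegral.integral_smul]
    simp [smul_eq_mul]
  rw [this, cauchy_simple_pole x (l i) (hl1 i), smul_eq_mul]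

lemma main_pointwise {n : ℕ} (hn : 1 ≤ n) (l : Fin n → ℂ) (hl : Function.Injective l)
    {ε : ℝ} (hε0 : 0 ≤ ε) (hε : ε ≤ 1/2) (hl' : ∀ i, ‖(l i)‖ ≤ ε)
    (x : ℂ) (hx : ‖x‖ ≤ Real.pi) :
    ‖((∑ i, (((Nat.factorial (n-1) : ℕ) : ℂ)
          * (∏ j ∈ Finset.univ.erase i, (l i - l j))⁻¹) * Complex.exp (l i * x))
        - x ^ (n-1))‖
      ≤ (Nat.factorial (n-1) : ℝ) * (n * ε * 4 ^ n * Real.exp Real.pi) := by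
  set fac : ℂ := ((Nat.factorial (n-1) : ℕ) : ℂ) with hfacdef
  have hl1 : ∀ i, ‖(l i)‖ < 1 := fun i => lt_of_le_of_lt (hl' i) (by linarith)
  have hpi : (2 * (Real.pi:ℂ) * I) ≠ 0 := by
    simp [Real.pi_ne_zero, I_ne_zero]
  have hfac0 : fac ≠ 0 := Nat.cast_ne_zero.2 (Nat.factorial_ne_zero _)
  set A : ℂ := ∮ z in C(0, 1), (∏ i, (z - l i))⁻¹ * Complex.exp (x * z) with hAdef
  set B : ℂ := ∮ z in C(0, 1), (z ^ n)⁻¹ * Complex.exp (x * z) with hBdef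
  have hA := integral_eq_sum hn l hl hl1 x
  have hB := cauchy_pole_n x hn
  rw [← hfacdef] at hB
  -- identity
  have hx1 : fac * (2 * Real.pi * I)⁻¹ * A
      = ∑ i, (fac * (∏ j ∈ Finset.univ.erase i, (l i - l j))⁻¹) * Complex.exp (l i * x) := by
    rw [hAdef, hA, Finset.mul_sum]
    refine Finset.sum_congr rfl fun i _ => ?_
    rw [mul_comm (l i) x]
    calc fac * (2 * (Real.pi:ℂ) * I)⁻¹
          * ((∏ j ∈ Finset.univ.erase i, (l i - l j))⁻¹ * (2 * Real.pi * I * Complex.exp (x * l i)))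
        = ((2 * (Real.pi:ℂ) * I)⁻¹ * (2 * Real.pi * I))
          * (fac * (∏ j ∈ Finset.univ.erase i, (l i - l j))⁻¹ * Complex.exp (x * l i)) := by ring
      _ = fac * (∏ j ∈ Finset.univ.erase i, (l i - l j))⁻¹ * Complex.exp (x * l i) := by
          rw [inv_mul_cancel₀ hpi, one_mul]
  have hx2 : fac * (2 * Real.pi * I)⁻¹ * B = x ^ (n-1) := by
    rw [hBdef, hB]
    calc fac * (2 * (Real.pi:ℂ) * I)⁻¹ * (2 * Real.pi * I * fac⁻¹ * x ^ (n-1))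
        = ((2 * (Real.pi:ℂ) * I)⁻¹ * (2 * Real.pi * I)) * (fac⁻¹ * fac) * x ^ (n-1) := by ring
      _ = x ^ (n-1) := by rw [inv_mul_cancel₀ hpi, inv_mul_cancel₀ hfac0, one_mul, one_mul]
  have hkey : (∑ i, (fac * (∏ j ∈ Finset.univ.erase i, (l i - l j))⁻¹) * Complex.exp (l i * x))
      - x ^ (n-1) = fac * (2 * Real.pi * I)⁻¹ * (A - B) := by
    rw [mul_sub, hx1, hx2]
  rw [hkey]
  -- norm bound
  have hconte : ContinuousOn (fun z : ℂ => Complex.exp (x * z)) (sphere (0:ℂ) 1) :=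
    (Complex.continuous_exp.comp (continuous_const.mul continuous_id)).continuousOn
  have hInt1 : CircleIntegrable (fun z => (∏ i, (z - l i))⁻¹ * Complex.exp (x * z)) 0 1 := by
    apply ContinuousOn.circleIntegrable (by norm_num)
    refine ContinuousOn.mul (ContinuousOn.inv₀ ?_ ?_) hconte
    · exact (continuous_finset_prod _ (fun i _ => continuous_id.sub continuous_const)).continuousOn
    · intro z hz
      rw [Finset.prod_ne_zero_iff]
      exact fun i _ => sub_ne_zero.2 (ne_of_sphere hz (hl1 i))
  have hInt2 : CircleIntegrable (fun z => (z ^ n)⁻¹ * Complex.exp (x * z)) 0 1 := by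
    apply ContinuousOn.circleIntegrable (by norm_num)
    refine ContinuousOn.mul (ContinuousOn.inv₀ (continuous_pow n).continuousOn ?_) hconte
    intro z hz
    apply pow_ne_zero
    intro h
    have := abs_one_of_sphere hz
    rw [h] at this; simp at this
  have hAB : ‖(A - B)‖ ≤ 2 * Real.pi * (n * ε * 4 ^ n * Real.exp Real.pi) := by
    rw [hAdef, hBdef, ← circleIntegral.integral_sub hInt1 hInt2]
    have := circleIntegral.norm_integral_le_of_norm_le_const (c := (0:ℂ)) (R := 1)
      (C := n * ε * 4 ^ n * Real.exp Real.pi) (by norm_num)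
      (fun z hz => by
        exact pointwise_bound hn l hε0 hε hl' x hx (abs_one_of_sphere hz))
    simpa using this
  rw [norm_mul, norm_mul]
  have h1 : ‖fac‖ = (Nat.factorial (n-1) : ℝ) := by
    rw [hfacdef]; simp
  have h2 : ‖(2 * Real.pi * I)⁻¹‖ = (2 * Real.pi)⁻¹ := by
    rw [norm_inv]
    simp [Complex.norm_I, Complex.norm_real, abs_of_pos Real.pi_pos]
  rw [h1, h2]
  calc (Nat.factorial (n-1) : ℝ) * (2 * Real.pi)⁻¹ * ‖(A - B)‖
      ≤ (Nat.factorial (n-1) : ℝ) * (2 * Real.pi)⁻¹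
        * (2 * Real.pi * (n * ε * 4 ^ n * Real.exp Real.pi)) := by
        have : (0:ℝ) ≤ (Nat.factorial (n-1) : ℝ) * (2 * Real.pi)⁻¹ := by positivity
        exact mul_le_mul_of_nonneg_left hAB this
    _ = (Nat.factorial (n-1) : ℝ) * (n * ε * 4 ^ n * Real.exp Real.pi) := by
        field_simp

end Aux

open Finset Complex in
set_option maxHeartbeats 1000000 in
/-- Theorem 3.1: for every `δ > 0` there is `ε₀ > 0` such that whenever
`λ₁, …, λₙ` are mutually distinct complex numbers with `|λᵢ| < ε₀`, some linear
combination `f(x) = ∑ cᵢ e^{λᵢ x}` (an element of the span of the exponentials)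
satisfies `‖f(x) − x^{n-1}‖_{L²([-π,π])} < δ`. -/
theorem stmt11 (n : ℕ) (hn : 1 ≤ n) :
    ∀ δ > (0 : ℝ), ∃ ε₀ > (0 : ℝ), ∀ l : Fin n → ℂ, Function.Injective l →
      (∀ i, ‖(l i)‖ < ε₀) →
      ∃ c : Fin n → ℂ,
        L2norm (fun x : ℝ =>
            (∑ i, c i * Complex.exp (l i * x)) - (x : ℂ) ^ (n - 1)) < δ := by
  intro δ hδ
  set K : ℝ := (Nat.factorial (n-1) : ℝ) * (n * 4 ^ n * Real.exp Real.pi) with hK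
  have hKpos : 0 < K := by
    have : (0:ℝ) < n := by exact_mod_cast hn
    positivity
  set SQ : ℝ := Real.sqrt (2 * Real.pi) with hSQ
  have hSQpos : 0 < SQ := Real.sqrt_pos.2 (by positivity)
  set ε₀ : ℝ := min (1/2) (δ / (SQ * K + 1)) with hε₀
  have hε₀pos : 0 < ε₀ := by
    apply lt_min (by norm_num)
    positivity
  refine ⟨ε₀, hε₀pos, ?_⟩
  intro l hl hsmall
  refine ⟨fun i => ((Nat.factorial (n-1) : ℕ) : ℂ)
    * (∏ j ∈ Finset.univ.erase i, (l i - l j))⁻¹, ?_⟩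
  set g : ℝ → ℂ := fun x : ℝ =>
    (∑ i, (((Nat.factorial (n-1) : ℕ) : ℂ)
      * (∏ j ∈ Finset.univ.erase i, (l i - l j))⁻¹) * Complex.exp (l i * x))
      - (x : ℂ) ^ (n - 1) with hg
  set M : ℝ := K * ε₀ with hM
  have hMpos : 0 < M := mul_pos hKpos hε₀pos
  -- pointwise bound
  have hbound : ∀ x : ℝ, x ∈ Set.Icc (-Real.pi) Real.pi → ‖g x‖ ≤ M := by
    intro x hx
    have hxabs : ‖((x:ℂ))‖ ≤ Real.pi := by
      rw [Complex.norm_real, Real.norm_eq_abs]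
      rcases hx with ⟨h1, h2⟩
      rw [abs_le]
      exact ⟨h1, h2⟩
    have := main_pointwise hn l hl (le_of_lt hε₀pos)
      (min_le_left _ _) (fun i => (hsmall i).le) (x:ℂ) hxabs
    calc ‖(g x)‖
        ≤ (Nat.factorial (n-1) : ℝ) * (n * ε₀ * 4 ^ n * Real.exp Real.pi) := this
      _ = M := by rw [hM, hK]; ring
  -- continuity of g
  have hgc : Continuous g := by
    apply Continuous.sub
    · apply continuous_finset_sum
      intro i _
      exact continuous_const.mul (Complex.continuous_exp.comp
        (continuous_const.mul Complex.continuous_ofReal))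
    · exact (continuous_pow (n-1)).comp Complex.continuous_ofReal
  -- L2 estimate
  have hIcc : (volume (Set.Icc (-Real.pi) Real.pi)).toReal = 2 * Real.pi := by
    rw [Real.volume_Icc, ENNReal.toReal_ofReal (by linarith [Real.pi_pos])]
    ring
  have hint : IntegrableOn (fun x => ‖g x‖ ^ 2) (Set.Icc (-Real.pi) Real.pi) volume := by
    exact ContinuousOn.integrableOn_compact isCompact_Icc ((hgc.norm.pow 2).continuousOn)
  have hintc : IntegrableOn (fun _ : ℝ => M ^ 2) (Set.Icc (-Real.pi) Real.pi) volume := by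
    exact integrableOn_const (by rw [Real.volume_Icc]; exact ENNReal.ofReal_ne_top)
  have hle : (∫ x in Set.Icc (-Real.pi) Real.pi, ‖g x‖ ^ 2)
      ≤ 2 * Real.pi * M ^ 2 := by
    calc (∫ x in Set.Icc (-Real.pi) Real.pi, ‖g x‖ ^ 2)
        ≤ ∫ _x in Set.Icc (-Real.pi) Real.pi, M ^ 2 := by
          apply setIntegral_mono_on hint hintc measurableSet_Icc
          intro x hx
          have h1 := hbound x hx
          have h2 : (0:ℝ) ≤ ‖g x‖ := norm_nonneg _
          nlinarith
      _ = 2 * Real.pi * M ^ 2 := by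
          rw [setIntegral_const, smul_eq_mul, measureReal_def, hIcc]
  have hL2 : L2norm g ≤ SQ * M := by
    rw [L2norm]
    calc Real.sqrt (∫ x in Set.Icc (-Real.pi) Real.pi, ‖g x‖ ^ 2)
        ≤ Real.sqrt (2 * Real.pi * M ^ 2) := Real.sqrt_le_sqrt hle
      _ = SQ * M := by
          rw [hSQ, Real.sqrt_mul (by positivity), Real.sqrt_sq hMpos.le]
  -- final numeric step
  have hfinal : SQ * M < δ := by
    have h1 : SQ * M ≤ SQ * K * (δ / (SQ * K + 1)) := by
      rw [hM, ← mul_assoc]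
      exact mul_le_mul_of_nonneg_left (min_le_right _ _) (by positivity)
    have hpos : (0:ℝ) < SQ * K + 1 := by positivity
    have h2 : SQ * K * (δ / (SQ * K + 1)) < δ := by
      rw [mul_div_assoc'] at *
      rw [div_lt_iff₀ hpos]
      nlinarith
    linarith
  exact lt_of_le_of_lt hL2 hfinal
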